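/- Let X_1,...,X_n be i.i.d., let B_1,...,B_V be a regular partition with V ≥ ⌈ln(δ^{-2})⌉, let r = (1 − √(1 − e^{-2}))/2, and suppose there are independent events Ω_1,...,Ω_V with E[ℓ(ŝ_K, s_o) 1_{Ω_K}] ≤ E and P(Ω_K^c) ≤ r for all K. Then P( min_{K=1,...,V} ℓ(ŝ_K, s_o) > 4e² E ) ≤ 2 e^{-V}. -/

import Mathlib

open MeasureTheory ProbabilityTheory
open scoped ENNReal

lemma auxnum : (1 - Real.sqrt (1 - Real.exp (-2))) / 2 + 1 / (4 * Real.exp 1 ^ 2) ≤ Real.exp (-1) := by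
  have ha : Real.exp (-1) * Real.exp 1 = 1 := by
    rw [← Real.exp_add]; norm_num
  have haa : Real.exp (-2 : ℝ) = Real.exp (-1) * Real.exp (-1) := by
    rw [← Real.exp_add]; norm_num
  have h1 : Real.exp (-1 : ℝ) < 1 := Real.exp_lt_one_iff.2 (by norm_num)
  have h0 : 0 < Real.exp (-1 : ℝ) := Real.exp_pos _
  have hE : 0 < Real.exp 1 := Real.exp_pos _
  have h2 : Real.exp (2 : ℝ) = Real.exp 1 * Real.exp 1 := by
    rw [← Real.exp_add]; norm_num
  have hx : 0 ≤ 1 - Real.exp (-2 : ℝ) := by nlinarith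
  have hs : 1 - Real.exp (-2 : ℝ) ≤ Real.sqrt (1 - Real.exp (-2)) :=
    Real.le_sqrt_of_sq_le (by nlinarith)
  have h4 : 1 / (4 * Real.exp 1 ^ 2) = Real.exp (-1) ^ 2 / 4 := by
    rw [eq_div_iff (by norm_num)]
    field_simp
    nlinarith
  rw [h4]
  nlinarith

/-- Block σ-algebras built from disjoint index sets of independent random variables
are independent. -/
lemma iIndep_blocks {Ω E : Type*} [MeasurableSpace Ω] [mE : MeasurableSpace E]
    {μ : Measure Ω} [IsProbabilityMeasure μ] {n V : ℕ}
    (X : Fin n → Ω → E) (hXmeas : ∀ i, Measurable (X i))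
    (hindep : iIndepFun X μ)
    (B : Fin V → Finset (Fin n))
    (hdisj : Pairwise (fun K K' => Disjoint (B K) (B K'))) :
    iIndep (fun K => ⨆ i ∈ (B K : Set (Fin n)), mE.comap (X i)) μ := by
  classical
  have hind : iIndep (fun i => mE.comap (X i)) μ := hindep.iIndep
  refine iIndepSets.iIndep
    (fun K => iSup₂_le fun i _ => measurable_iff_comap_le.1 (hXmeas i))
    (fun K => piiUnionInter (fun i => {s | MeasurableSet[mE.comap (X i)] s}) (B K))
    (fun K => isPiSystem_piiUnionInter _
      (fun i => @MeasurableSpace.isPiSystem_measurableSet Ω (mE.comap (X i))) _)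
    (fun K => (generateFrom_piiUnionInter_measurableSet _ _).symm) ?_
  rw [iIndepSets_iff]
  intro s f hf
  have hf' : ∀ K, ∃ (t : Finset (Fin n)) (ftK : Fin n → Set Ω),
      ↑t ⊆ (B K : Set (Fin n)) ∧ (∀ i ∈ t, MeasurableSet[mE.comap (X i)] (ftK i)) ∧
      (K ∈ s → f K = ⋂ i ∈ t, ftK i) := by
    intro K
    by_cases hK : K ∈ s
    · obtain ⟨t, hts, ftK, hftK, heq⟩ := hf K hK
      exact ⟨t, ftK, hts, hftK, fun _ => heq⟩
    · exact ⟨∅, fun _ => Set.univ, by simp, by simp, fun h => absurd h hK⟩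
  choose p ft hp hft heq using hf'
  have hpB : ∀ K i, i ∈ p K → i ∈ B K := fun K i hi => by
    have := hp K (Finset.mem_coe.2 hi); exact Finset.mem_coe.1 this
  have huniq : ∀ K K' i, i ∈ p K → i ∈ p K' → K = K' := by
    intro K K' i hi hi'
    by_contra hne
    exact (Finset.disjoint_left.1 (hdisj hne)) (hpB K i hi) (hpB K' i hi')
  set g : Fin n → Set Ω := fun i =>
    if h : ∃ K, K ∈ s ∧ i ∈ p K then ft h.choose i else Set.univ with hg_def
  have hg : ∀ K ∈ s, ∀ i ∈ p K, g i = ft K i := by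
    intro K hK i hi
    have hex : ∃ K, K ∈ s ∧ i ∈ p K := ⟨K, hK, hi⟩
    have hspec := hex.choose_spec
    have hKeq : hex.choose = K := huniq _ _ i hspec.2 hi
    simp only [hg_def, dif_pos hex, hKeq]
  have hgm : ∀ i ∈ s.biUnion p, MeasurableSet[mE.comap (X i)] (g i) := by
    intro i hi
    obtain ⟨K, hK, hiK⟩ := Finset.mem_biUnion.1 hi
    rw [hg K hK i hiK]
    exact hft K i hiK
  have hdisjp : (↑s : Set (Fin V)).PairwiseDisjoint p := by
    intro K _ K' _ hne
    exact Finset.disjoint_left.2 fun i hi hi' => hne (huniq K K' i hi hi')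
  have hKinter : ∀ K ∈ s, f K = ⋂ i ∈ p K, g i := by
    intro K hK
    rw [heq K hK]
    exact Set.iInter₂_congr fun i hi => (hg K hK i hi).symm
  calc μ (⋂ K ∈ s, f K) = μ (⋂ i ∈ s.biUnion p, g i) := by
        rw [Finset.set_biInter_biUnion]
        exact congrArg μ (Set.iInter₂_congr hKinter)
    _ = ∏ i ∈ s.biUnion p, μ (g i) := hind.meas_biInter hgm
    _ = ∏ K ∈ s, ∏ i ∈ p K, μ (g i) := Finset.prod_biUnion hdisjp
    _ = ∏ K ∈ s, μ (f K) := by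
        refine Finset.prod_congr rfl fun K hK => ?_
        rw [hKinter K hK]
        exact (hind.meas_biInter fun i hi => by
          rw [hg K hK i hi]; exact hft K i hi).symm

/-- Lemma 7 (control of the minimum via good events): with a regular partition
into `V ≥ ⌈ln(δ⁻²)⌉` blocks of an i.i.d. sample, block-wise nonnegative losses
`ℓ(ŝ_K, s_o) = G K (X ·)` and block-wise events `Ω_K = {X · ∈ S K}` (both
depending only on the coordinates in `B K`), if
`E[ℓ(ŝ_K, s_o) 1_{Ω_K}] ≤ E` and `P(Ω_K^c) ≤ r = (1 - √(1 - e⁻²))/2` for all `K`,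
then `P(min_K ℓ(ŝ_K, s_o) > 4e² E) ≤ 2 e^{-V}`. -/
theorem min_block_loss_good_events_bound
    {Ω E : Type*} [MeasurableSpace Ω] [MeasurableSpace E]
    (μ : Measure Ω) [IsProbabilityMeasure μ]
    (n : ℕ) (hn : 0 < n)
    (δ : ℝ) (hδ : 0 < δ)
    (V : ℕ) (hV : ⌈Real.log (δ ^ (-2 : ℤ))⌉₊ ≤ V) (hVpos : 0 < V)
    (X : Fin n → Ω → E) (hXmeas : ∀ i, Measurable (X i))
    (hindep : iIndepFun X μ)
    (P : Measure E) (hid : ∀ i, Measure.map (X i) μ = P)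
    (B : Fin V → Finset (Fin n))
    (hdisj : Pairwise (fun K K' => Disjoint (B K) (B K')))
    (hcover : Finset.univ.biUnion B = Finset.univ)
    (hreg : ∀ K, |((B K).card : ℝ) - (n : ℝ) / V| ≤ 1)
    (G : Fin V → (Fin n → E) → ℝ) (hGmeas : ∀ K, Measurable (G K))
    (hGnonneg : ∀ K v, 0 ≤ G K v)
    (hGint : ∀ K, Integrable (fun ω => G K (fun i => X i ω)) μ)
    (hGlocal : ∀ K v w, (∀ i ∈ B K, v i = w i) → G K v = G K w)
    (S : Fin V → Set (Fin n → E)) (hSmeas : ∀ K, MeasurableSet (S K))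
    (hSlocal : ∀ K v w, (∀ i ∈ B K, v i = w i) → (v ∈ S K ↔ w ∈ S K))
    (Ebound : ℝ)
    (hmean : ∀ K, ∫ ω in {ω | (fun i => X i ω) ∈ S K}, G K (fun i => X i ω) ∂μ
        ≤ Ebound)
    (hbad : ∀ K, μ {ω | (fun i => X i ω) ∉ S K}
        ≤ ENNReal.ofReal ((1 - Real.sqrt (1 - Real.exp (-2))) / 2)) :
    μ {ω | ∀ K, 4 * Real.exp 1 ^ 2 * Ebound < G K (fun i => X i ω)}
      ≤ ENNReal.ofReal (2 * Real.exp (-(V : ℝ))) := by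
  classical
  set r : ℝ := (1 - Real.sqrt (1 - Real.exp (-2))) / 2 with hr_def
  set c : ℝ := 4 * Real.exp 1 ^ 2 * Ebound with hc_def
  -- nonemptiness
  have hΩne : Nonempty Ω := by
    by_contra h
    rw [not_nonempty_iff] at h
    have h1 := measure_univ (μ := μ)
    rw [Set.univ_eq_empty_iff.mpr h, measure_empty] at h1
    exact zero_ne_one h1
  obtain ⟨ω₀⟩ := hΩne
  set e₀ : E := X ⟨0, hn⟩ ω₀ with he₀
  -- block σ-algebras and localized maps
  set mb : Fin V → MeasurableSpace Ω :=
    fun K => ⨆ i ∈ (B K : Set (Fin n)), MeasurableSpace.comap (X i) inferInstance with hmb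
  set Z : Fin V → Ω → (Fin n → E) :=
    fun K ω i => if i ∈ B K then X i ω else e₀ with hZ
  have hZmeas : ∀ K, Measurable[mb K] (Z K) := by
    intro K
    refine @measurable_pi_lambda Ω (Fin n) (fun _ => E) (mb K) _ _ fun i => ?_
    by_cases hi : i ∈ B K
    · simp only [hZ, hi, if_true]
      exact measurable_iff_comap_le.2
        (le_iSup₂ (f := fun i (_ : i ∈ (B K : Set (Fin n))) =>
          MeasurableSpace.comap (X i) inferInstance) i hi)
    · simp only [hZ, hi, if_false]
      exact measurable_const
  have hZG : ∀ K ω, G K (Z K ω) = G K (fun i => X i ω) :=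
    fun K ω => hGlocal K _ _ fun i hi => by simp [hZ, hi]
  have hZS : ∀ K ω, Z K ω ∈ S K ↔ (fun i => X i ω) ∈ S K :=
    fun K ω => hSlocal K _ _ fun i hi => by simp [hZ, hi]
  -- the blockwise events
  set A : Fin V → Set Ω := fun K => Z K ⁻¹' ((S K)ᶜ ∪ {v | c < G K v}) with hA_def
  have hAmb : ∀ K, MeasurableSet[mb K] (A K) := fun K =>
    hZmeas K (((hSmeas K).compl).union (measurableSet_lt measurable_const (hGmeas K)))
  -- independence
  have hiIndep : iIndep mb μ := iIndep_blocks X hXmeas hindep B hdisj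
  have hprod : μ (⋂ K, A K) = ∏ K, μ (A K) := hiIndep.meas_iInter hAmb
  -- the target is contained in the intersection
  have hsub : {ω | ∀ K, c < G K (fun i => X i ω)} ⊆ ⋂ K, A K := by
    intro ω hω
    refine Set.mem_iInter.2 fun K => ?_
    refine Set.mem_preimage.2 (Or.inr ?_)
    show c < G K (Z K ω)
    rw [hZG K ω]
    exact hω K
  -- measurability helpers
  have hXsm : Measurable (fun ω i => X i ω) := measurable_pi_lambda _ hXmeas
  have hSEmeas : ∀ K, MeasurableSet {ω | (fun i => X i ω) ∈ S K} :=
    fun K => hXsm (hSmeas K)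
  have hGXmeas : ∀ K, MeasurableSet {ω | c < G K (fun i => X i ω)} :=
    fun K => (measurableSet_lt measurable_const ((hGmeas K).comp hXsm))
  have hEb : 0 ≤ Ebound := by
    refine le_trans ?_ (hmean ⟨0, hVpos⟩)
    exact setIntegral_nonneg (hSEmeas _) fun ω _ => hGnonneg _ _
  have hr0 : 0 ≤ r := by
    have h1 : Real.sqrt (1 - Real.exp (-2)) ≤ 1 := by
      have h2 := Real.sqrt_le_sqrt (show 1 - Real.exp (-2 : ℝ) ≤ 1 by
        nlinarith [Real.exp_pos (-2 : ℝ)])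
      rwa [Real.sqrt_one] at h2
    rw [hr_def]
    linarith
  -- Markov / vanishing-integral bound on each block
  have hMarkov : ∀ K, μ ({ω | (fun i => X i ω) ∈ S K} ∩ {ω | c < G K (fun i => X i ω)})
      ≤ ENNReal.ofReal (1 / (4 * Real.exp 1 ^ 2)) := by
    intro K
    set ν := μ.restrict {ω | (fun i => X i ω) ∈ S K} with hν
    have hres : μ ({ω | (fun i => X i ω) ∈ S K} ∩ {ω | c < G K (fun i => X i ω)})
        = ν {ω | c < G K (fun i => X i ω)} := by
      rw [hν, Measure.restrict_apply (hGXmeas K), Set.inter_comm]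
    rw [hres]
    have hint : Integrable (fun ω => G K (fun i => X i ω)) ν := (hGint K).restrict
    have hIle : ∫ ω, G K (fun i => X i ω) ∂ν ≤ Ebound := hmean K
    rcases eq_or_lt_of_le hEb with hE0 | hEpos
    · -- Ebound = 0 : the integral vanishes, so G = 0 a.e. on the good set
      have hI0 : ∫ ω, G K (fun i => X i ω) ∂ν = 0 :=
        le_antisymm (hE0 ▸ hIle) (integral_nonneg fun ω => hGnonneg _ _)
      have hae : (fun ω => G K (fun i => X i ω)) =ᵐ[ν] 0 :=
        (integral_eq_zero_iff_of_nonneg (fun ω => hGnonneg _ _) hint).1 hI0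
      have hzero : ν {ω | c < G K (fun i => X i ω)} = 0 := by
        have h0 : ν {ω | ¬ G K (fun i => X i ω) = 0} = 0 := by
          have := ae_iff.1 hae
          simpa using this
        refine measure_mono_null ?_ h0
        intro ω h
        have hc0 : c = 0 := by rw [hc_def, ← hE0, mul_zero]
        have hpos : (0 : ℝ) < G K (fun i => X i ω) := by
          rw [← hc0]; exact h
        exact ne_of_gt hpos
      rw [hzero]
      exact zero_le
    · -- Ebound > 0 : Markov's inequality
      have hcpos : 0 < c := by
        rw [hc_def]; positivity
      have hmar := mul_meas_ge_le_integral_of_nonneg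
        (ae_of_all ν fun ω => hGnonneg K _) hint c
      have hle1 : ν {ω | c < G K (fun i => X i ω)} ≤ ν {ω | c ≤ G K (fun i => X i ω)} :=
        measure_mono fun ω h => (show c < G K (fun i => X i ω) from h).le
      have hfin : ν {ω | c ≤ G K (fun i => X i ω)} ≠ ⊤ := measure_ne_top ν _
      have htR : (ν {ω | c ≤ G K (fun i => X i ω)}).toReal ≤ Ebound / c := by
        rw [le_div_iff₀ hcpos]
        calc (ν {ω | c ≤ G K (fun i => X i ω)}).toReal * c
            = c * (ν {ω | c ≤ G K (fun i => X i ω)}).toReal := mul_comm _ _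
          _ ≤ ∫ ω, G K (fun i => X i ω) ∂ν := hmar
          _ ≤ Ebound := hIle
      calc ν {ω | c < G K (fun i => X i ω)}
          ≤ ν {ω | c ≤ G K (fun i => X i ω)} := hle1
        _ = ENNReal.ofReal ((ν {ω | c ≤ G K (fun i => X i ω)}).toReal) :=
            (ENNReal.ofReal_toReal hfin).symm
        _ ≤ ENNReal.ofReal (Ebound / c) := ENNReal.ofReal_le_ofReal htR
        _ = ENNReal.ofReal (1 / (4 * Real.exp 1 ^ 2)) := by
            congr 1
            rw [hc_def, mul_comm, ← div_div, div_self (ne_of_gt hEpos)]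
  -- bound each block event
  have hAK : ∀ K, μ (A K) ≤ ENNReal.ofReal (Real.exp (-1)) := by
    intro K
    have hA_sub : A K ⊆ {ω | (fun i => X i ω) ∉ S K} ∪
        ({ω | (fun i => X i ω) ∈ S K} ∩ {ω | c < G K (fun i => X i ω)}) := by
      intro ω hω
      rcases hω with h | h
      · exact Or.inl fun hmem => h ((hZS K ω).2 hmem)
      · by_cases hmem : (fun i => X i ω) ∈ S K
        · exact Or.inr ⟨hmem, show c < G K (fun i => X i ω) by rw [← hZG K ω]; exact h⟩
        · exact Or.inl hmem
    calc μ (A K) ≤ μ ({ω | (fun i => X i ω) ∉ S K} ∪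
          ({ω | (fun i => X i ω) ∈ S K} ∩ {ω | c < G K (fun i => X i ω)})) :=
          measure_mono hA_sub
      _ ≤ μ {ω | (fun i => X i ω) ∉ S K} +
          μ ({ω | (fun i => X i ω) ∈ S K} ∩ {ω | c < G K (fun i => X i ω)}) :=
          measure_union_le _ _
      _ ≤ ENNReal.ofReal r + ENNReal.ofReal (1 / (4 * Real.exp 1 ^ 2)) :=
          add_le_add (hbad K) (hMarkov K)
      _ = ENNReal.ofReal (r + 1 / (4 * Real.exp 1 ^ 2)) :=
          (ENNReal.ofReal_add hr0 (by positivity)).symm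
      _ ≤ ENNReal.ofReal (Real.exp (-1)) := ENNReal.ofReal_le_ofReal auxnum
  -- conclude
  calc μ {ω | ∀ K, c < G K (fun i => X i ω)}
      ≤ μ (⋂ K, A K) := measure_mono hsub
    _ = ∏ K, μ (A K) := hprod
    _ ≤ ∏ _K : Fin V, ENNReal.ofReal (Real.exp (-1)) :=
        Finset.prod_le_prod' fun K _ => hAK K
    _ = ENNReal.ofReal (Real.exp (-1)) ^ V := by
        rw [Finset.prod_const, Finset.card_univ, Fintype.card_fin]
    _ = ENNReal.ofReal (Real.exp (-1) ^ V) := (ENNReal.ofReal_pow (Real.exp_nonneg _) V).symm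
    _ = ENNReal.ofReal (Real.exp (-(V : ℝ))) := by
        rw [← Real.exp_nat_mul]
        norm_num
    _ ≤ ENNReal.ofReal (2 * Real.exp (-(V : ℝ))) := by
        refine ENNReal.ofReal_le_ofReal ?_
        nlinarith [Real.exp_pos (-(V : ℝ))]
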